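/- (Hersch balancing lemma, measure-theoretic form) Let μ be a finite measure on a measurable space Σ and F : Σ → ℂ measurable with |F| < 1 μ-almost everywhere. Then there exists a₀ ∈ ℂ with |a₀| < 1 such that ∫ (F - a₀)/(1 - conj(a₀)·F) dμ = 0. -/

import Mathlib

open MeasureTheory Complex Set

lemma herschDenomNe (a z : ℂ) (ha : ‖a‖ ≤ 1) (hz : ‖z‖ < 1) :
    1 - (starRingEnd ℂ) a * z ≠ 0 := by
  intro h
  have h1 : (1 : ℂ) = (starRingEnd ℂ) a * z := by linear_combination h
  have : ‖(starRingEnd ℂ) a * z‖ < 1 := by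
    rw [norm_mul, Complex.norm_conj]
    calc ‖a‖ * ‖z‖ ≤ 1 * ‖z‖ := by
          apply mul_le_mul_of_nonneg_right ha (norm_nonneg z)
      _ = ‖z‖ := by ring
      _ < 1 := hz
  rw [← h1] at this
  simp at this

lemma herschBound (a z : ℂ) (ha : ‖a‖ ≤ 1) (hz : ‖z‖ < 1) :
    ‖(z - a) / (1 - (starRingEnd ℂ) a * z)‖ ≤ 1 := by
  rw [norm_div, div_le_one (by
    exact norm_pos_iff.2 (herschDenomNe a z ha hz))]
  have key : Complex.normSq (1 - (starRingEnd ℂ) a * z) - Complex.normSq (z - a)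
      = (1 - Complex.normSq a) * (1 - Complex.normSq z) := by
    simp [Complex.normSq_apply, Complex.mul_re, Complex.mul_im, Complex.sub_re, Complex.sub_im,
      Complex.conj_re, Complex.conj_im, Complex.one_re, Complex.one_im]
    ring
  have hna : Complex.normSq a ≤ 1 := by
    rw [← Complex.sq_norm]; nlinarith [norm_nonneg a]
  have hnz : Complex.normSq z ≤ 1 := by
    rw [← Complex.sq_norm]; nlinarith [norm_nonneg z]
  have h2 : Complex.normSq (z - a) ≤ Complex.normSq (1 - (starRingEnd ℂ) a * z) := by
    nlinarith
  have := Real.sqrt_le_sqrt h2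
  rwa [← Complex.norm_def, ← Complex.norm_def] at this

lemma herschPathLift (γ : ℝ → ℂ) (hγ : Continuous γ) (hne : ∀ t, γ t ≠ 0) (a b : ℝ)
    (hab : a ≤ b) :
    ∃ c : ℝ → ℂ, ContinuousOn c (Icc a b) ∧ ∀ t ∈ Icc a b, Complex.exp (c t) = γ t := by
  -- minimum of |γ| on the interval
  obtain ⟨x₀, hx₀, hx₀min'⟩ := isCompact_Icc.exists_isMinOn (Set.nonempty_Icc.2 hab)
    (f := fun t => ‖γ t‖) (continuous_norm.comp hγ).continuousOn
  have hx₀min : ∀ y ∈ Icc a b, ‖γ x₀‖ ≤ ‖γ y‖ := fun y hy => hx₀min' hy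
  set m : ℝ := ‖γ x₀‖ with hm
  have hmpos : 0 < m := norm_pos_iff.2 (hne x₀)
  -- uniform continuity
  have huc := isCompact_Icc.uniformContinuousOn_of_continuous (s := Icc a b) hγ.continuousOn
  rw [Metric.uniformContinuousOn_iff] at huc
  obtain ⟨δ, hδpos, hδ⟩ := huc m hmpos
  -- partition
  obtain ⟨N, hNpos, hstep⟩ : ∃ N : ℕ, 0 < N ∧ (b - a) / N < δ := by
    refine ⟨⌈(b - a) / δ⌉₊ + 1, Nat.succ_pos _, ?_⟩
    have h1 : (b - a) / δ ≤ (⌈(b - a) / δ⌉₊ : ℝ) := Nat.le_ceil _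
    have h2 : ((⌈(b - a) / δ⌉₊ : ℝ)) < ((⌈(b - a) / δ⌉₊ + 1 : ℕ) : ℝ) := by push_cast; linarith
    have hNpos' : (0:ℝ) < ((⌈(b - a) / δ⌉₊ + 1 : ℕ) : ℝ) := by positivity
    rw [div_lt_iff₀ hNpos']
    calc b - a = ((b - a)/δ) * δ := by field_simp
      _ ≤ (⌈(b - a) / δ⌉₊ : ℝ) * δ := mul_le_mul_of_nonneg_right h1 hδpos.le
      _ < δ * ((⌈(b - a) / δ⌉₊ + 1 : ℕ) : ℝ) := by
          rw [mul_comm δ]; exact mul_lt_mul_of_pos_right h2 hδpos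
  have hNR : (0:ℝ) < (N:ℝ) := by exact_mod_cast hNpos
  set s : ℝ := (b - a) / N with hs
  have hs0 : 0 ≤ s := div_nonneg (by linarith) hNR.le
  set pt : ℕ → ℝ := fun i => a + i * s with hpt
  have hptdiff : ∀ i : ℕ, pt (i + 1) - pt i = s := by
    intro i; simp only [hpt]; push_cast; ring
  have hptmono : ∀ i : ℕ, pt i ≤ pt (i + 1) := by
    intro i; have := hptdiff i; linarith
  have hptmem : ∀ i : ℕ, i ≤ N → pt i ∈ Icc a b := by
    intro i hi
    have hiR : (i:ℝ) ≤ (N:ℝ) := by exact_mod_cast hi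
    constructor
    · simp only [hpt]; nlinarith [Nat.cast_nonneg (α := ℝ) i]
    · simp only [hpt, hs]
      have h3 : (i:ℝ) * ((b - a) / N) ≤ (N:ℝ) * ((b - a) / N) :=
        mul_le_mul_of_nonneg_right hiR hs0
      have h4 : (N:ℝ) * ((b - a) / N) = b - a := by field_simp
      linarith
  have hptN : pt N = b := by
    simp only [hpt, hs]; field_simp; ring
  have hpt0 : pt 0 = a := by simp [hpt]
  -- the candidate lift
  set ratio : ℕ → ℝ → ℂ := fun i t => γ (min t (pt (i + 1))) / γ (min t (pt i)) with hratio
  set c : ℝ → ℂ := fun t =>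
    Complex.log (γ a) + ∑ i ∈ Finset.range N, Complex.log (ratio i t) with hc
  -- min values stay in Icc
  have hminmem : ∀ (t : ℝ), t ∈ Icc a b → ∀ i : ℕ, i ≤ N → min t (pt i) ∈ Icc a b := by
    intro t ht i hi
    exact ⟨le_min ht.1 (hptmem i hi).1, min_le_of_left_le ht.2⟩
  -- ratio is close to 1 on Icc
  have hratio_close : ∀ (i : ℕ), i < N → ∀ t ∈ Icc a b, ‖ratio i t - 1‖ < 1 := by
    intro i hi t ht
    have h1 : min t (pt i) ∈ Icc a b := hminmem t ht i (le_of_lt hi)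
    have h2 : min t (pt (i+1)) ∈ Icc a b := hminmem t ht (i+1) hi
    have hd : dist (min t (pt (i+1))) (min t (pt i)) < δ := by
      rw [Real.dist_eq, abs_lt]
      have h5 : min t (pt (i+1)) - min t (pt i) ≤ s := by
        rcases le_total t (pt i) with h | h
        · rw [min_eq_left h, min_eq_left (h.trans (hptmono i))]
          linarith
        · rw [min_eq_right h]
          have h7 : min t (pt (i+1)) ≤ pt (i+1) := min_le_right _ _
          have := hptdiff i
          linarith
      have h8 : min t (pt i) ≤ min t (pt (i+1)) := min_le_min le_rfl (hptmono i)
      constructor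
      · linarith
      · linarith
    have hdist := hδ _ h2 _ h1 hd
    have hq := hx₀min _ h1
    have hr0 : γ (min t (pt i)) ≠ 0 := hne _
    have heq : ratio i t - 1 = (γ (min t (pt (i+1))) - γ (min t (pt i))) / γ (min t (pt i)) := by
      simp only [hratio]; rw [div_sub_one hr0]
    rw [heq, norm_div, div_lt_one (norm_pos_iff.2 hr0)]
    rw [Complex.dist_eq] at hdist
    calc ‖γ (min t (pt (i+1))) - γ (min t (pt i))‖ < m := hdist
      _ ≤ ‖γ (min t (pt i))‖ := hq
  have hratio_slit : ∀ (i : ℕ), i < N → ∀ t ∈ Icc a b, ratio i t ∈ Complex.slitPlane := by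
    intro i hi t ht
    have h := hratio_close i hi t ht
    left
    have h1 : |(ratio i t - 1).re| ≤ ‖ratio i t - 1‖ := Complex.abs_re_le_norm _
    have h2 : (ratio i t - 1).re = (ratio i t).re - 1 := by simp
    have h3 := abs_lt.1 (lt_of_le_of_lt h1 h)
    linarith [h3.1]
  refine ⟨c, ?_, ?_⟩
  · -- continuity
    apply ContinuousOn.add continuousOn_const
    apply continuousOn_finset_sum
    intro i hi
    rw [Finset.mem_range] at hi
    intro t ht
    have hratio_cont : Continuous (ratio i) := by
      apply Continuous.div
      · exact hγ.comp (continuous_id.min continuous_const)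
      · exact hγ.comp (continuous_id.min continuous_const)
      · intro x; exact hne _
    exact ((continuousAt_clog (hratio_slit i hi t ht)).comp
      hratio_cont.continuousAt).continuousWithinAt
  · -- lifting property
    intro t ht
    have key : ∀ n : ℕ, n ≤ N →
        ∏ i ∈ Finset.range n, ratio i t = γ (min t (pt n)) / γ a := by
      intro n hn
      induction n with
      | zero => simp [hpt0, min_eq_right ht.1, div_self (hne a)]
      | succ k ih =>
        rw [Finset.prod_range_succ, ih (by omega)]
        have h1 : γ (min t (pt k)) ≠ 0 := hne _
        have h2 : γ a ≠ 0 := hne _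
        simp only [hratio]
        rw [div_mul_div_comm, mul_comm (γ (min t (pt k))), mul_div_mul_right _ _ h1]
    rw [hc]
    rw [Complex.exp_add, Complex.exp_sum]
    have hprodlog : ∀ i ∈ Finset.range N, Complex.exp (Complex.log (ratio i t)) = ratio i t := by
      intro i hi
      exact Complex.exp_log (div_ne_zero (hne _) (hne _))
    rw [Finset.prod_congr rfl hprodlog, key N le_rfl, Complex.exp_log (hne a), hptN,
      min_eq_left ht.2]
    rw [mul_comm, div_mul_cancel₀ _ (hne a)]

lemma herschIncrementUnique (c₁ c₂ : ℝ → ℂ) (a b : ℝ) (hab : a ≤ b)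
    (h₁ : ContinuousOn c₁ (Icc a b)) (h₂ : ContinuousOn c₂ (Icc a b))
    (hexp : ∀ t ∈ Icc a b, Complex.exp (c₁ t) = Complex.exp (c₂ t)) :
    c₁ b - c₁ a = c₂ b - c₂ a := by
  have ha : a ∈ Icc a b := ⟨le_rfl, hab⟩
  have hb : b ∈ Icc a b := ⟨hab, le_rfl⟩
  have hint : ∀ t ∈ Icc a b, ∃ n : ℤ, c₁ t - c₂ t = n * (2 * Real.pi * Complex.I) := by
    intro t ht
    rw [← Complex.exp_eq_one_iff, Complex.exp_sub, hexp t ht, div_self (Complex.exp_ne_zero _)]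
  obtain ⟨na, hna⟩ := hint a ha
  obtain ⟨nb, hnb⟩ := hint b hb
  have him : ∀ t ∈ Icc a b, ∃ n : ℤ, (c₁ t - c₂ t).im = n * (2 * Real.pi) := by
    intro t ht
    obtain ⟨n, hn⟩ := hint t ht
    exact ⟨n, by rw [hn]; simp⟩
  -- show na = nb
  have hnanb : na = nb := by
    by_contra hne
    have hcont : ContinuousOn (fun t => (c₁ t - c₂ t).im) (Icc a b) :=
      Complex.continuous_im.comp_continuousOn (h₁.sub h₂)
    have hima : (c₁ a - c₂ a).im = na * (2 * Real.pi) := by rw [hna]; simp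
    have himb : (c₁ b - c₂ b).im = nb * (2 * Real.pi) := by rw [hnb]; simp
    have hπ := Real.pi_pos
    -- pick intermediate value
    set v : ℝ := if na < nb then na * (2 * Real.pi) + Real.pi
      else na * (2 * Real.pi) - Real.pi with hv
    have hvmem : v ∈ uIcc ((fun t => (c₁ t - c₂ t).im) a) ((fun t => (c₁ t - c₂ t).im) b) := by
      simp only [hima, himb]
      rcases lt_or_gt_of_ne hne with h | h
      · have h1 : (na:ℝ) + 1 ≤ (nb:ℝ) := by exact_mod_cast h
        rw [hv, if_pos h]
        apply mem_uIcc.2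
        left
        constructor <;> nlinarith
      · have h1 : (nb:ℝ) + 1 ≤ (na:ℝ) := by exact_mod_cast h
        rw [hv, if_neg (by omega)]
        apply mem_uIcc.2
        right
        constructor <;> nlinarith
    have := intermediate_value_uIcc (f := fun t => (c₁ t - c₂ t).im) (a := a) (b := b)
      (by rwa [uIcc_of_le hab]) hvmem
    obtain ⟨t₀, ht₀mem, ht₀⟩ := this
    rw [uIcc_of_le hab] at ht₀mem
    obtain ⟨n₀, hn₀⟩ := him t₀ ht₀mem
    simp only at ht₀
    rw [ht₀] at hn₀
    rcases lt_or_gt_of_ne hne with h | h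
    · rw [hv, if_pos h] at hn₀
      have : ((2 * (n₀ - na) : ℤ) : ℝ) = 1 := by push_cast; nlinarith
      have h2 : (2 * (n₀ - na) : ℤ) = 1 := by exact_mod_cast this
      omega
    · rw [hv, if_neg (by omega)] at hn₀
      have : ((2 * (na - n₀) : ℤ) : ℝ) = 1 := by push_cast; nlinarith
      have h2 : (2 * (na - n₀) : ℤ) = 1 := by exact_mod_cast this
      omega
  have : c₁ b - c₂ b = c₁ a - c₂ a := by rw [hna, hnb, hnanb]
  linear_combination this

lemma herschLoopCompare (γ₁ γ₂ c₁ c₂ : ℝ → ℂ) (a b : ℝ) (hab : a ≤ b)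
    (hc₁ : ContinuousOn c₁ (Icc a b)) (hc₂ : ContinuousOn c₂ (Icc a b))
    (hexp₁ : ∀ t ∈ Icc a b, Complex.exp (c₁ t) = γ₁ t)
    (hexp₂ : ∀ t ∈ Icc a b, Complex.exp (c₂ t) = γ₂ t)
    (hclose : ∀ t ∈ Icc a b, ‖γ₂ t - γ₁ t‖ < ‖γ₁ t‖)
    (hloop : γ₂ a / γ₁ a = γ₂ b / γ₁ b) :
    c₁ b - c₁ a = c₂ b - c₂ a := by
  have ha : a ∈ Icc a b := ⟨le_rfl, hab⟩
  have hb : b ∈ Icc a b := ⟨hab, le_rfl⟩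
  have hne₁ : ∀ t ∈ Icc a b, γ₁ t ≠ 0 := by
    intro t ht h0
    have h := hclose t ht
    rw [h0] at h
    simp at h
    exact absurd h (norm_nonneg _).not_gt
  have hne₂ : ∀ t ∈ Icc a b, γ₂ t ≠ 0 := by
    intro t ht h0
    have h := hclose t ht
    rw [h0, zero_sub, norm_neg] at h
    exact lt_irrefl _ h
  have hrne : ∀ t ∈ Icc a b, γ₂ t / γ₁ t ≠ 0 := fun t ht =>
    div_ne_zero (hne₂ t ht) (hne₁ t ht)
  have hslit : ∀ t ∈ Icc a b, γ₂ t / γ₁ t ∈ Complex.slitPlane := by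
    intro t ht
    left
    have h := hclose t ht
    have h1 : ‖γ₂ t / γ₁ t - 1‖ < 1 := by
      have heq : γ₂ t / γ₁ t - 1 = (γ₂ t - γ₁ t) / γ₁ t := by
        rw [div_sub_one (hne₁ t ht)]
      rw [heq, norm_div, div_lt_one (norm_pos_iff.2 (hne₁ t ht))]
      exact h
    have h2 : |(γ₂ t / γ₁ t - 1).re| ≤ ‖γ₂ t / γ₁ t - 1‖ := Complex.abs_re_le_norm _
    have h3 := abs_lt.1 (lt_of_le_of_lt h2 h1)
    have h4 : (γ₂ t / γ₁ t - 1).re = (γ₂ t / γ₁ t).re - 1 := by simp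
    linarith [h3.1]
  -- continuity of γ₁, γ₂ on Icc from their lifts
  have hγ₁ : ContinuousOn γ₁ (Icc a b) :=
    (Complex.continuous_exp.comp_continuousOn hc₁).congr fun t ht => (hexp₁ t ht).symm
  have hγ₂ : ContinuousOn γ₂ (Icc a b) :=
    (Complex.continuous_exp.comp_continuousOn hc₂).congr fun t ht => (hexp₂ t ht).symm
  set ℓ : ℝ → ℂ := fun t => Complex.log (γ₂ t / γ₁ t) with hℓ
  have hℓcont : ContinuousOn ℓ (Icc a b) := by
    intro t ht
    show ContinuousWithinAt (fun s => Complex.log (γ₂ s / γ₁ s)) (Icc a b) t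
    have hr : ContinuousWithinAt (fun s => γ₂ s / γ₁ s) (Icc a b) t :=
      (hγ₂ t ht).div (hγ₁ t ht) (hne₁ t ht)
    exact hr.clog (hslit t ht)
  have hlift : ∀ t ∈ Icc a b, Complex.exp (c₁ t + ℓ t) = Complex.exp (c₂ t) := by
    intro t ht
    rw [Complex.exp_add, hexp₁ t ht, hexp₂ t ht, hℓ]
    rw [Complex.exp_log (hrne t ht)]
    field_simp [hne₁ t ht]
  have key := herschIncrementUnique (fun t => c₁ t + ℓ t) c₂ a b hab
    (hc₁.add hℓcont) hc₂ hlift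
  have hℓab : ℓ a = ℓ b := by rw [hℓ]; simp only; rw [hloop]
  linear_combination key + hℓab

lemma herschLocallyConst (W : ℝ → ℂ) (a b : ℝ) (hab : a ≤ b)
    (hloc : ∀ s ∈ Icc a b, ∃ ε > 0, ∀ s' ∈ Icc a b, |s' - s| < ε → W s' = W s) :
    W b = W a := by
  set T : Set ℝ := {s ∈ Icc a b | W s = W a} with hT
  have haT : a ∈ T := ⟨⟨le_rfl, hab⟩, rfl⟩
  have hTne : T.Nonempty := ⟨a, haT⟩
  have hbdd : BddAbove T := ⟨b, fun s hs => hs.1.2⟩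
  set u : ℝ := sSup T with hu
  have hau : a ≤ u := le_csSup hbdd haT
  have hub : u ≤ b := csSup_le hTne fun s hs => hs.1.2
  have huI : u ∈ Icc a b := ⟨hau, hub⟩
  obtain ⟨ε, hεpos, hε⟩ := hloc u huI
  have huT : u ∈ T := by
    obtain ⟨s, hsT, hs⟩ := exists_lt_of_lt_csSup hTne (by linarith : u - ε < u)
    have hsu : s ≤ u := le_csSup hbdd hsT
    have : W s = W u := hε s hsT.1 (by rw [abs_lt]; constructor <;> linarith)
    exact ⟨huI, by rw [← this, hsT.2]⟩
  rcases eq_or_lt_of_le hub with h | h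
  · rw [← h]; exact huT.2
  · exfalso
    set s' : ℝ := min b (u + ε / 2) with hs'
    have hs'gt : u < s' := lt_min h (by linarith)
    have hs'I : s' ∈ Icc a b := ⟨le_trans hau hs'gt.le, min_le_left _ _⟩
    have hs'close : |s' - u| < ε := by
      rw [abs_lt]
      have : s' ≤ u + ε / 2 := min_le_right _ _
      constructor <;> linarith
    have : W s' = W a := by rw [hε s' hs'I hs'close, huT.2]
    have hle : s' ≤ u := le_csSup hbdd ⟨hs'I, this⟩
    linarith

theorem hersch_balancing
    {X : Type*} [MeasurableSpace X] (μ : Measure X) [IsFiniteMeasure μ]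
    (F : X → ℂ) (hF : Measurable F) (hF1 : ∀ᵐ x ∂μ, ‖F x‖ < 1) :
    ∃ a₀ : ℂ, ‖a₀‖ < 1 ∧
      ∫ x, (F x - a₀) / (1 - (starRingEnd ℂ) a₀ * F x) ∂μ = 0 := by
  by_contra hcon
  push_neg at hcon
  set g : ℂ → ℂ := fun a => ∫ x, (F x - a) / (1 - (starRingEnd ℂ) a * F x) ∂μ with hg
  have hcon' : ∀ a : ℂ, ‖a‖ < 1 → g a ≠ 0 := fun a ha => hcon a ha
  -- μ is nonzero
  have hμ : μ ≠ 0 := by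
    intro h
    exact hcon' 0 (by simp) (by simp [hg, h])
  set μX : ℝ := (μ univ).toReal with hμX
  have hμuniv : 0 < μ univ := Measure.measure_univ_pos.2 hμ
  have hμXpos : 0 < μX := ENNReal.toReal_pos hμuniv.ne' (measure_ne_top μ univ)
  -- boundary identity
  have hbd : ∀ a : ℂ, ‖a‖ = 1 → g a = (μX : ℂ) * (-a) := by
    intro a ha
    have hca : (starRingEnd ℂ) a * a = 1 := by
      have h1 : a * (starRingEnd ℂ) a = (Complex.normSq a : ℂ) := Complex.mul_conj a
      have h2 : Complex.normSq a = 1 := by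
        have := Complex.sq_norm a
        rw [ha] at this
        simpa using this.symm
      rw [mul_comm] at h1
      rw [h1, h2]; simp
    have heq : ∀ᵐ x ∂μ, (F x - a) / (1 - (starRingEnd ℂ) a * F x) = -a := by
      filter_upwards [hF1] with x hx
      have hd : 1 - (starRingEnd ℂ) a * F x ≠ 0 := herschDenomNe a (F x) ha.le hx
      rw [div_eq_iff hd]
      linear_combination (-(F x)) * hca
    rw [hg]
    simp only
    rw [integral_congr_ae heq, integral_const]
    simp [hμX, Complex.real_smul, measureReal_def]
  -- nonvanishing on the closed ball
  have hgne : ∀ a : ℂ, ‖a‖ ≤ 1 → g a ≠ 0 := by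
    intro a ha
    rcases lt_or_eq_of_le ha with h | h
    · exact hcon' a h
    · rw [hbd a h]
      apply mul_ne_zero
      · exact_mod_cast hμXpos.ne'
      · simp only [neg_ne_zero]
        intro h0
        rw [h0] at h; simp at h
  -- continuity of g on the closed ball
  have hmeas : ∀ a : ℂ, AEStronglyMeasurable (fun x => (F x - a) / (1 - (starRingEnd ℂ) a * F x)) μ :=
    fun a => ((hF.sub measurable_const).div
      (measurable_const.sub (measurable_const.mul hF))).aestronglyMeasurable
  have hgcont : ContinuousOn g (Metric.closedBall (0:ℂ) 1) := by
    intro a₀ ha₀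
    have ha₀' : ‖a₀‖ ≤ 1 := by
      exact mem_closedBall_zero_iff.1 ha₀
    apply continuousWithinAt_of_dominated (bound := fun _ => (1:ℝ))
    · exact Filter.Eventually.of_forall fun a => hmeas a
    · have hmem : ∀ᶠ a in nhdsWithin a₀ (Metric.closedBall (0:ℂ) 1),
          a ∈ Metric.closedBall (0:ℂ) 1 := eventually_mem_nhdsWithin
      filter_upwards [hmem] with a ha
      filter_upwards [hF1] with x hx
      have : ‖a‖ ≤ 1 := by
        exact mem_closedBall_zero_iff.1 ha
      simpa using herschBound a (F x) this hx
    · exact integrable_const 1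
    · filter_upwards [hF1] with x hx
      have hd : 1 - (starRingEnd ℂ) a₀ * F x ≠ 0 := herschDenomNe a₀ (F x) ha₀' hx
      apply ContinuousAt.continuousWithinAt
      exact ContinuousAt.div
        ((continuous_const.sub continuous_id).continuousAt)
        ((continuous_const.sub (continuous_star.mul continuous_const)).continuousAt)
        hd
  -- the loop family
  set π : ℝ := Real.pi with hπ
  have hπpos : 0 < π := Real.pi_pos
  set e : ℝ → ℂ := fun t => Complex.exp ((t:ℂ) * Complex.I) with he
  have habse : ∀ t : ℝ, ‖e t‖ = 1 := fun t => Complex.norm_exp_ofReal_mul_I t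
  have hecont : Continuous e :=
    Complex.continuous_exp.comp (Complex.continuous_ofReal.mul continuous_const)
  have he0 : e 0 = 1 := by simp [he]
  have he2π : e (2 * π) = 1 := by
    rw [he]
    push_cast
    exact Complex.exp_two_pi_mul_I
  set K : ℝ → ℝ → ℂ := fun s t => g ((s:ℂ) * e t) with hK
  have hmem : ∀ s : ℝ, s ∈ Icc (0:ℝ) 1 → ∀ t : ℝ, ‖(s:ℂ) * e t‖ ≤ 1 := by
    intro s hs t
    rw [norm_mul, habse, mul_one, Complex.norm_real, Real.norm_eq_abs, _root_.abs_of_nonneg hs.1]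
    exact hs.2
  have hKne : ∀ s ∈ Icc (0:ℝ) 1, ∀ t : ℝ, K s t ≠ 0 :=
    fun s hs t => hgne _ (hmem s hs t)
  have hKcont : ∀ s ∈ Icc (0:ℝ) 1, Continuous (K s) := by
    intro s hs
    apply hgcont.comp_continuous (continuous_const.mul hecont)
    intro t
    rw [mem_closedBall_zero_iff]
    exact hmem s hs t
  have hKloop : ∀ s : ℝ, K s 0 = K s (2 * π) := by
    intro s; rw [hK]; simp only [he0, he2π]
  -- winding increments
  set P : ℝ → ℂ → Prop := fun s w => ∃ c : ℝ → ℂ, ContinuousOn c (Icc 0 (2*π)) ∧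
    (∀ t ∈ Icc 0 (2*π), Complex.exp (c t) = K s t) ∧ c (2*π) - c 0 = w with hP
  have h2π : (0:ℝ) ≤ 2 * π := by linarith
  have hex : ∀ s ∈ Icc (0:ℝ) 1, ∃ w, P s w := by
    intro s hs
    obtain ⟨c, hc1, hc2⟩ := herschPathLift (K s) (hKcont s hs) (hKne s hs) 0 (2*π) h2π
    exact ⟨c (2*π) - c 0, c, hc1, hc2, rfl⟩
  have huniq : ∀ s w w', P s w → P s w' → w = w' := by
    rintro s w w' ⟨c, hc1, hc2, hc3⟩ ⟨c', hc1', hc2', hc3'⟩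
    rw [← hc3, ← hc3']
    exact herschIncrementUnique c c' 0 (2*π) h2π hc1 hc1'
      (fun t ht => by rw [hc2 t ht, hc2' t ht])
  choose! W hW using hex
  -- local constancy
  have hloc : ∀ s ∈ Icc (0:ℝ) 1, ∃ ε > 0, ∀ s' ∈ Icc (0:ℝ) 1, |s' - s| < ε → W s' = W s := by
    intro s₀ hs₀
    -- minimum of |K s₀| on [0, 2π]
    obtain ⟨t₀, ht₀, ht₀min'⟩ := isCompact_Icc.exists_isMinOn (nonempty_Icc.2 h2π)
      (f := fun t => ‖K s₀ t‖) (continuous_norm.comp (hKcont s₀ hs₀)).continuousOn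
    have ht₀min : ∀ t ∈ Icc 0 (2*π), ‖K s₀ t₀‖ ≤ ‖K s₀ t‖ :=
      fun t ht => ht₀min' ht
    set m : ℝ := ‖K s₀ t₀‖ with hm
    have hmpos : 0 < m := norm_pos_iff.2 (hKne s₀ hs₀ t₀)
    -- uniform continuity of the two-variable map on a compact set
    set Φ : ℝ × ℝ → ℂ := fun p => g ((p.1 : ℂ) * e p.2) with hΦ
    set C : Set (ℝ × ℝ) := Icc (0:ℝ) 1 ×ˢ Icc (0:ℝ) (2*π) with hC
    have hCcomp : IsCompact C := isCompact_Icc.prod isCompact_Icc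
    have hΦcont : ContinuousOn Φ C := by
      apply hgcont.comp ((continuous_ofReal.comp continuous_fst).mul
        (hecont.comp continuous_snd)).continuousOn
      intro p hp
      rw [mem_closedBall_zero_iff]
      exact hmem p.1 hp.1 p.2
    have huc := hCcomp.uniformContinuousOn_of_continuous hΦcont
    rw [Metric.uniformContinuousOn_iff] at huc
    obtain ⟨δ, hδpos, hδ⟩ := huc m hmpos
    refine ⟨δ, hδpos, ?_⟩
    intro s hs hclose
    -- the two loops are uniformly close
    have hptwise : ∀ t ∈ Icc (0:ℝ) (2*π),
        ‖K s t - K s₀ t‖ < ‖K s₀ t‖ := by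
      intro t ht
      have hd : dist ((s, t) : ℝ × ℝ) ((s₀, t) : ℝ × ℝ) < δ := by
        rw [Prod.dist_eq]
        simp only [dist_self]
        rw [Real.dist_eq]
        calc max |s - s₀| 0 = |s - s₀| := max_eq_left (abs_nonneg _)
          _ < δ := hclose
      have := hδ (s, t) ⟨hs, ht⟩ (s₀, t) ⟨hs₀, ht⟩ hd
      rw [Complex.dist_eq] at this
      calc ‖K s t - K s₀ t‖ = ‖Φ (s, t) - Φ (s₀, t)‖ := rfl
        _ < m := this
        _ ≤ ‖K s₀ t‖ := ht₀min t ht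
    obtain ⟨c₀, hc₀1, hc₀2, hc₀3⟩ := hW s₀ hs₀
    obtain ⟨c, hc1, hc2, hc3⟩ := hW s hs
    rw [← hc3, ← hc₀3]
    have := herschLoopCompare (K s₀) (K s) c₀ c 0 (2*π) h2π hc₀1 hc1 hc₀2 hc2 hptwise
      (by rw [← hKloop s, ← hKloop s₀])
    linear_combination -this
  -- endpoint values
  have hW1 : W 1 = W 0 := herschLocallyConst W 0 1 zero_le_one hloc
  have hW0 : W 0 = 0 := by
    apply huniq 0 _ _ (hW 0 ⟨le_rfl, zero_le_one⟩)
    refine ⟨fun _ => Complex.log (g 0), continuousOn_const, ?_, by ring⟩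
    intro t ht
    rw [Complex.exp_log (hgne 0 (by simp))]
    rw [hK]; simp
  have hWb : W 1 = 2 * π * Complex.I := by
    apply huniq 1 _ _ (hW 1 ⟨zero_le_one, le_rfl⟩)
    refine ⟨fun t => (Real.log μX : ℂ) + π * Complex.I + t * Complex.I, ?_, ?_, by push_cast; ring⟩
    · apply continuousOn_const.add
      exact (Complex.continuous_ofReal.mul continuous_const).continuousOn
    · intro t ht
      rw [Complex.exp_add, Complex.exp_add]
      have h1 : Complex.exp ((Real.log μX : ℂ)) = (μX : ℂ) := by
        rw [← Complex.ofReal_exp, Real.exp_log hμXpos]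
      have h2 : Complex.exp ((π : ℝ) * Complex.I) = -1 := Complex.exp_pi_mul_I
      rw [h1]
      rw [hK]
      simp only [Complex.ofReal_one, one_mul]
      rw [hbd (e t) (habse t)]
      rw [he]
      rw [h2]
      ring
  rw [hWb, hW0] at hW1
  have hne : ((2:ℂ) * (π:ℝ) * Complex.I) ≠ 0 := by
    simp [Complex.I_ne_zero, hπ, Real.pi_ne_zero]
  exact hne hW1
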